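/- Let P be a set of prime numbers such that the sum of 1/√p over p ∈ P is finite. Then the set of real numbers α with α > 1, α not an integer, and such that the multiplicative submonoid B of ℝ generated by {(p : ℝ) : p ∈ P} ∪ {α} satisfies |x − y| ≥ 1 for all distinct x, y ∈ B, has positive Lebesgue measure (in particular, such α exist). -/

import Mathlib

open MeasureTheory

namespace RuzsaAux


noncomputable def sq : ℕ →* ℝ where
  toFun n := 1 / Real.sqrt n
  map_one' := by simp
  map_mul' m n := by
    push_cast
    rw [Real.sqrt_mul (by positivity), one_div, one_div, one_div, mul_inv]

lemma sq_apply (n : ℕ) : sq n = 1 / Real.sqrt n := rfl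

lemma sq_nonneg' (n : ℕ) : 0 ≤ sq n := by rw [sq_apply]; positivity

lemma sq_lt_one {p : ℕ} (hp : 2 ≤ p) : sq p < 1 := by
  rw [sq_apply, div_lt_one (by positivity : (0:ℝ) < Real.sqrt p)]
  have : (1:ℝ) = Real.sqrt 1 := by simp
  rw [this]
  exact Real.sqrt_lt_sqrt (by norm_num) (by exact_mod_cast lt_of_lt_of_le one_lt_two (by exact_mod_cast hp))

lemma sq_le_34 {p : ℕ} (hp : 2 ≤ p) : sq p ≤ 3/4 := by
  rw [sq_apply, div_le_iff₀ (by positivity : (0:ℝ) < Real.sqrt p)]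
  have h2 : (4:ℝ)/3 ≤ Real.sqrt 2 := by
    rw [show (4:ℝ)/3 = Real.sqrt ((4/3)^2) from (Real.sqrt_sq (by norm_num)).symm]
    exact Real.sqrt_le_sqrt (by norm_num)
  have : Real.sqrt 2 ≤ Real.sqrt p := Real.sqrt_le_sqrt (by exact_mod_cast hp)
  nlinarith [Real.sqrt_nonneg (p:ℝ)]

lemma inv_one_sub_le_exp {x : ℝ} (h0 : 0 ≤ x) (h1 : x ≤ 3/4) :
    (1 - x)⁻¹ ≤ Real.exp (4 * x) := by
  have he : 1 + 4 * x ≤ Real.exp (4 * x) := by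
    simpa [add_comm] using Real.add_one_le_exp (4 * x)
  have hpos : (0:ℝ) < 1 - x := by linarith
  rw [inv_le_iff_one_le_mul₀ hpos]
  nlinarith [Real.exp_pos (4 * x)]

lemma closure_primes_spec (P : Set ℕ) (hP : ∀ p ∈ P, p.Prime) {n : ℕ}
    (hn : n ∈ Submonoid.closure P) : n ≠ 0 ∧ ∀ q : ℕ, q.Prime → q ∣ n → q ∈ P := by
  induction hn using Submonoid.closure_induction with
  | mem x hx =>
      refine ⟨(hP x hx).ne_zero, fun q hq hqx => ?_⟩
      rw [(Nat.prime_dvd_prime_iff_eq hq (hP x hx)).mp hqx]; exact hx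
  | one => exact ⟨one_ne_zero, fun q hq hq1 => absurd (Nat.eq_one_of_dvd_one hq1) hq.ne_one⟩
  | mul a b ha hb iha ihb =>
      exact ⟨mul_ne_zero iha.1 ihb.1, fun q hq hqd =>
        (hq.dvd_mul.mp hqd).elim (iha.2 q hq) (ihb.2 q hq)⟩

lemma summable_sq_closure (P : Set ℕ) (hP : ∀ p ∈ P, p.Prime)
    (hsum : Summable (fun p : P => 1 / Real.sqrt ((p : ℕ) : ℝ))) :
    Summable (fun n : (Submonoid.closure P : Submonoid ℕ) => 1 / Real.sqrt ((n : ℕ) : ℝ)) := by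
  have hind : Summable (Set.indicator P (fun n : ℕ => 1 / Real.sqrt (n:ℝ))) :=
    summable_subtype_iff_indicator.mp hsum
  set C₀ : ℝ := ∑' n : ℕ, Set.indicator P (fun n : ℕ => 1 / Real.sqrt (n:ℝ)) n with hC₀
  have key : ∀ u : Finset (Submonoid.closure P : Submonoid ℕ),
      ∑ x ∈ u, (1 / Real.sqrt ((x : ℕ) : ℝ)) ≤ Real.exp (4 * C₀) := by
    intro u
    classical
    set F : Finset ℕ := u.biUnion (fun n => (n : ℕ).primeFactors) with hF
    have hFP : ∀ q ∈ F, q ∈ P ∧ q.Prime := by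
      intro q hq
      obtain ⟨n, hn, hq'⟩ := Finset.mem_biUnion.mp hq
      obtain ⟨hqp, hqd, -⟩ := Nat.mem_primeFactors.mp hq'
      exact ⟨(closure_primes_spec P hP n.2).2 q hqp hqd, hqp⟩
    have hlt : ∀ {p : ℕ}, p.Prime → ‖sq p‖ < 1 := by
      intro p hp
      rw [Real.norm_of_nonneg (sq_nonneg' p)]
      exact sq_lt_one hp.two_le
    obtain ⟨hsummable, hhs⟩ :=
      EulerProduct.summable_and_hasSum_factoredNumbers_prod_filter_prime_geometric (f := sq) hlt F
    -- step A : the finite sum is at most the tsum over factored numbers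
    have hsum_fact : Summable (fun m : Nat.factoredNumbers F => sq m) :=
      hhs.summable
    have hsum_ind : Summable (Set.indicator (Nat.factoredNumbers F) (fun n => sq n)) :=
      summable_subtype_iff_indicator.mp hsum_fact
    have hmemfact : ∀ x ∈ u, (x : ℕ) ∈ Nat.factoredNumbers F := by
      intro x hx
      refine ⟨(closure_primes_spec P hP x.2).1, fun p hp => ?_⟩
      refine Finset.mem_biUnion.mpr ⟨x, hx, ?_⟩
      have hpp := Nat.prime_of_mem_primeFactorsList hp
      rw [Nat.mem_primeFactors]
      exact ⟨hpp, Nat.dvd_of_mem_primeFactorsList hp, (closure_primes_spec P hP x.2).1⟩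
    have hA : ∑ x ∈ u, (1 / Real.sqrt ((x : ℕ) : ℝ)) ≤ ∑' m : Nat.factoredNumbers F, sq m := by
      have h2 := Finset.sum_image (s := u) (g := Subtype.val)
        (f := fun n => Set.indicator (Nat.factoredNumbers F) (fun n => sq n) n)
        (fun a _ b _ h => Subtype.ext h)
      have h1 : ∑ x ∈ u, (1 / Real.sqrt ((x : ℕ) : ℝ))
          = ∑ n ∈ u.image Subtype.val, Set.indicator (Nat.factoredNumbers F) (fun n => sq n) n := by
        rw [h2]
        refine Finset.sum_congr rfl fun x hx => ?_
        show 1 / Real.sqrt ((x:ℕ):ℝ) = Set.indicator (Nat.factoredNumbers F) (fun n => sq n) (x:ℕ)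
        rw [Set.indicator_of_mem (hmemfact x hx)]
        rfl
      rw [h1, tsum_subtype]
      exact Summable.sum_le_tsum _ (fun i _ => Set.indicator_nonneg (fun n _ => sq_nonneg' n) i) hsum_ind
    -- step B : bound the Euler product
    have hB : ∏ p ∈ F with p.Prime, (1 - sq p)⁻¹ ≤ Real.exp (4 * C₀) := by
      have hsub : ∀ p ∈ F.filter Nat.Prime, p ∈ P ∧ p.Prime := by
        intro p hp; exact hFP p (Finset.mem_filter.mp hp).1
      calc ∏ p ∈ F with p.Prime, (1 - sq p)⁻¹
          ≤ ∏ p ∈ F with p.Prime, Real.exp (4 * sq p) := by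
            refine Finset.prod_le_prod (fun p hp => ?_) (fun p hp => ?_)
            · have h := sq_lt_one (hsub p hp).2.two_le
              exact inv_nonneg.mpr (by linarith)
            · exact inv_one_sub_le_exp (sq_nonneg' p) (sq_le_34 (hsub p hp).2.two_le)
        _ = Real.exp (∑ p ∈ F with p.Prime, 4 * sq p) := by rw [Real.exp_sum]
        _ ≤ Real.exp (4 * C₀) := by
            rw [Real.exp_le_exp, ← Finset.mul_sum]
            refine mul_le_mul_of_nonneg_left ?_ (by norm_num)
            have h1 : ∑ p ∈ F with p.Prime, sq p
                = ∑ p ∈ F with p.Prime, Set.indicator P (fun n : ℕ => 1 / Real.sqrt (n:ℝ)) p := by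
              refine Finset.sum_congr rfl fun p hp => ?_
              rw [Set.indicator_of_mem (hsub p hp).1, sq_apply]
            rw [h1]
            exact Summable.sum_le_tsum _ (fun i _ => Set.indicator_nonneg (fun n _ => by positivity) i) hind
    calc ∑ x ∈ u, (1 / Real.sqrt ((x : ℕ) : ℝ)) ≤ ∑' m : Nat.factoredNumbers F, sq m := hA
      _ = ∏ p ∈ F with p.Prime, (1 - sq p)⁻¹ := hhs.tsum_eq
      _ ≤ Real.exp (4 * C₀) := hB
  exact summable_of_sum_le (fun x => by positivity) key

lemma one_le_of_mem_closure (P : Set ℕ) (hP : ∀ p ∈ P, p.Prime) {n : ℕ}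
    (hn : n ∈ Submonoid.closure P) : 1 ≤ n :=
  Nat.one_le_iff_ne_zero.mpr (closure_primes_spec P hP hn).1

lemma mem_closure_rep (P : Set ℕ) (α : ℝ) {x : ℝ}
    (hx : x ∈ Submonoid.closure ((((↑) : ℕ → ℝ) '' P) ∪ {α})) :
    ∃ N : ℕ, N ∈ Submonoid.closure P ∧ ∃ j : ℕ, x = (N : ℝ) * α ^ j := by
  induction hx using Submonoid.closure_induction with
  | mem z hz =>
      rcases hz with ⟨p, hp, rfl⟩ | hz
      · exact ⟨p, Submonoid.subset_closure hp, 0, by simp⟩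
      · rw [Set.mem_singleton_iff] at hz
        subst hz
        exact ⟨1, one_mem _, 1, by simp⟩
  | one => exact ⟨1, one_mem _, 0, by simp⟩
  | mul a b ha hb iha ihb =>
      obtain ⟨N, hN, j, rfl⟩ := iha
      obtain ⟨M, hM, l, rfl⟩ := ihb
      exact ⟨N * M, mul_mem hN hM, j + l, by push_cast; ring⟩

lemma separation (P : Set ℕ) {α : ℝ} (hα : 1 < α)
    (hG : ∀ N ∈ Submonoid.closure P, ∀ M ∈ Submonoid.closure P, ∀ k : ℕ, 1 ≤ k →
      (N:ℝ) * α ^ k ≠ (M:ℝ) → 1 ≤ |(N:ℝ) * α ^ k - (M:ℝ)|) :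
    ∀ x ∈ Submonoid.closure ((((↑) : ℕ → ℝ) '' P) ∪ {α}),
      ∀ y ∈ Submonoid.closure ((((↑) : ℕ → ℝ) '' P) ∪ {α}), x ≠ y → 1 ≤ |x - y| := by
  have hα0 : (0:ℝ) < α := lt_trans one_pos hα
  have key : ∀ (N M : ℕ), N ∈ Submonoid.closure P → M ∈ Submonoid.closure P → ∀ j l : ℕ, j ≤ l →
      (N:ℝ) * α ^ j ≠ (M:ℝ) * α ^ l → 1 ≤ |(N:ℝ) * α ^ j - (M:ℝ) * α ^ l| := by
    intro N M hN hM j l hjl hne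
    have hαj : (1:ℝ) ≤ α ^ j := one_le_pow₀ hα.le
    rcases Nat.eq_or_lt_of_le hjl with rfl | hlt
    · have hNM : N ≠ M := fun h => hne (by rw [h])
      have h1 : (1:ℝ) ≤ |(N:ℝ) - M| := by
        have h0 : ((N:ℤ) - M) ≠ 0 := sub_ne_zero.mpr (by exact_mod_cast hNM)
        have h2 := Int.one_le_abs h0
        calc (1:ℝ) = ((1:ℤ):ℝ) := by norm_num
          _ ≤ ((|(N:ℤ) - M| : ℤ) : ℝ) := by exact_mod_cast h2
          _ = |(N:ℝ) - M| := by push_cast; ring_nf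
      calc (1:ℝ) ≤ |(N:ℝ) - M| := h1
        _ ≤ |(N:ℝ) - M| * α ^ j := le_mul_of_one_le_right (abs_nonneg _) hαj
        _ = |(N:ℝ) * α ^ j - M * α ^ j| := by
            rw [← sub_mul, abs_mul, abs_of_pos (pow_pos hα0 j)]
    · set k := l - j with hk
      have hk1 : 1 ≤ k := by omega
      have hlj : l = j + k := by omega
      have hMk : (M:ℝ) * α ^ k ≠ (N:ℝ) := by
        intro h
        apply hne
        rw [hlj, pow_add, ← h]
        ring
      have h2 := hG M hM N hN k hk1 hMk
      calc (1:ℝ) ≤ |(M:ℝ) * α ^ k - N| := h2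
        _ ≤ |(M:ℝ) * α ^ k - N| * α ^ j := le_mul_of_one_le_right (abs_nonneg _) hαj
        _ = |((M:ℝ) * α ^ k - N) * α ^ j| := by
            rw [abs_mul, abs_of_pos (pow_pos hα0 j)]
        _ = |(M:ℝ) * α ^ l - N * α ^ j| := by
            rw [hlj, pow_add]
            ring_nf
        _ = |(N:ℝ) * α ^ j - M * α ^ l| := abs_sub_comm _ _
  intro x hx y hy hxy
  obtain ⟨N, hN, j, rfl⟩ := mem_closure_rep P α hx
  obtain ⟨M, hM, l, rfl⟩ := mem_closure_rep P α hy
  rcases le_total j l with h | h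
  · exact key N M hN hM j l h hxy
  · rw [abs_sub_comm]
    exact key M N hM hN l j h (Ne.symm hxy)

lemma sqrt_pow' {x : ℝ} (hx : 0 ≤ x) (k : ℕ) : Real.sqrt (x ^ k) = (Real.sqrt x) ^ k := by
  induction k with
  | zero => simp
  | succ k ih => rw [pow_succ, pow_succ, Real.sqrt_mul (pow_nonneg hx k), ih]

noncomputable def badE (T : ℝ) (n m k : ℕ) : Set ℝ :=
  {β : ℝ | β ∈ Set.Ioo T (2*T) ∧ |(n:ℝ) * β ^ k - (m:ℝ)| < 1}

lemma volume_badE (T : ℝ) (hT : 8 ≤ T) (n m k : ℕ) (hn : 1 ≤ n) (hm : 1 ≤ m) :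
    volume (badE T n m (k+1)) ≤ ENNReal.ofReal
      ((1 / Real.sqrt n) * (1 / Real.sqrt m) *
        (4 * Real.sqrt 2 * T * (Real.sqrt (2*T) / T) ^ (k+1))) := by
  have hT0 : (0:ℝ) < T := by linarith
  have hTk : (0:ℝ) < T ^ k := pow_pos hT0 k
  have hn0 : (0:ℝ) < (n:ℝ) := by exact_mod_cast hn
  have hm0 : (0:ℝ) < (m:ℝ) := by exact_mod_cast hm
  rcases Set.eq_empty_or_nonempty (badE T n m (k+1)) with he | ⟨β₀, hβ₀⟩
  · rw [he]; simp
  set d : ℝ := 2 / ((n:ℝ) * T ^ k) with hd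
  have hd0 : 0 < d := by positivity
  -- diameter bound
  have diam : ∀ β ∈ badE T n m (k+1), ∀ γ ∈ badE T n m (k+1), β ≤ γ → γ - β ≤ d := by
    intro β hβ γ hγ hβγ
    obtain ⟨⟨hβ1, hβ2⟩, hβ3⟩ := hβ
    obtain ⟨⟨hγ1, hγ2⟩, hγ3⟩ := hγ
    have hβpos : (0:ℝ) < β := lt_trans hT0 hβ1
    have h1 : (n:ℝ) * (γ ^ (k+1) - β ^ (k+1)) < 2 := by
      rw [abs_lt] at hβ3 hγ3
      nlinarith [hβ3.1, hβ3.2, hγ3.1, hγ3.2]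
    have hgs := geom_sum₂_mul γ β (k+1)
    have hsum_ge : T ^ k ≤ ∑ i ∈ Finset.range (k+1), γ ^ i * β ^ (k - i) := by
      have h0mem : 0 ∈ Finset.range (k+1) := Finset.mem_range.mpr (Nat.succ_pos k)
      have hterm : T ^ k ≤ γ ^ 0 * β ^ (k - 0) := by
        simpa using pow_le_pow_left₀ hT0.le hβ1.le k
      have hγpos : (0:ℝ) < γ := lt_trans hT0 hγ1
      refine le_trans hterm (Finset.single_le_sum (f := fun i => γ ^ i * β ^ (k - i))
        (fun i _ => mul_nonneg (pow_nonneg hγpos.le _) (pow_nonneg hβpos.le _)) h0mem)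
    have h2 : T ^ k * (γ - β) ≤ γ ^ (k+1) - β ^ (k+1) := by
      have hsub : (0:ℝ) ≤ γ - β := by linarith
      calc T ^ k * (γ - β) ≤ (∑ i ∈ Finset.range (k+1), γ ^ i * β ^ (k - i)) * (γ - β) := by
            exact mul_le_mul_of_nonneg_right hsum_ge hsub
        _ = γ ^ (k+1) - β ^ (k+1) := by
            rw [← hgs]
            simp only [Nat.add_sub_cancel]
    rw [hd, le_div_iff₀ (by positivity)]
    nlinarith [h1, h2]
  -- badE ⊆ Icc
  have hsub : badE T n m (k+1) ⊆ Set.Icc (β₀ - d) (β₀ + d) := by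
    intro β hβ
    rcases le_total β β₀ with h | h
    · have := diam β hβ β₀ hβ₀ h
      constructor <;> linarith
    · have := diam β₀ hβ₀ β hβ h
      constructor <;> linarith
  have hvol : volume (badE T n m (k+1)) ≤ ENNReal.ofReal (2 * d) := by
    calc volume (badE T n m (k+1)) ≤ volume (Set.Icc (β₀ - d) (β₀ + d)) := measure_mono hsub
      _ = ENNReal.ofReal (2 * d) := by rw [Real.volume_Icc]; ring_nf
  refine le_trans hvol (ENNReal.ofReal_le_ofReal ?_)
  -- the m-bound from nonemptiness
  have hmb : (m:ℝ) ≤ 2 * n * (2*T) ^ (k+1) := by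
    obtain ⟨⟨h1, h2⟩, h3⟩ := hβ₀
    rw [abs_lt] at h3
    have hβ₀pos : (0:ℝ) ≤ β₀ := le_of_lt (lt_trans hT0 h1)
    have hpow : β₀ ^ (k+1) ≤ (2*T) ^ (k+1) := pow_le_pow_left₀ hβ₀pos h2.le (k+1)
    have h2T : (1:ℝ) ≤ (2*T) ^ (k+1) := one_le_pow₀ (by linarith)
    have hn1 : (1:ℝ) ≤ (n:ℝ) := by exact_mod_cast hn
    nlinarith [h3.2, mul_le_mul_of_nonneg_left hpow hn0.le,
      mul_le_mul hn1 h2T (by norm_num) hn0.le]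
  -- the arithmetic
  set A := Real.sqrt n with hA
  set B := Real.sqrt m with hB
  have hAA : A * A = (n:ℝ) := Real.mul_self_sqrt hn0.le
  have hA0 : 0 < A := Real.sqrt_pos.mpr hn0
  have hB0 : 0 < B := Real.sqrt_pos.mpr hm0
  have hS2T : 0 < Real.sqrt (2*T) := Real.sqrt_pos.mpr (by linarith)
  have hkey : B ≤ Real.sqrt 2 * A * (Real.sqrt (2*T)) ^ (k+1) := by
    have h1 : B ≤ Real.sqrt (2 * n * (2*T) ^ (k+1)) := Real.sqrt_le_sqrt hmb
    rw [Real.sqrt_mul (by positivity), Real.sqrt_mul (by norm_num), sqrt_pow' (by linarith)] at h1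
    linarith [h1]
  have hrhs : (1 / A) * (1 / B) * (4 * Real.sqrt 2 * T * (Real.sqrt (2*T) / T) ^ (k+1))
      = 4 * Real.sqrt 2 * (Real.sqrt (2*T)) ^ (k+1) / (A * B * T ^ k) := by
    rw [div_pow]
    field_simp
    ring
  rw [hrhs, hd]
  have hlhs : 2 * (2/((n:ℝ)*T^k)) = 4/((n:ℝ)*T^k) := by ring
  rw [hlhs, div_le_div_iff₀ (by positivity) (by positivity)]
  have hTkpos : (0:ℝ) < T ^ k := hTk
  have h2 : 0 ≤ Real.sqrt 2 := Real.sqrt_nonneg 2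
  -- 2*2*(A*B*T^k) ≤ 4√2 (√(2T))^{k+1} * (n * T^k)
  have hmain : A * B ≤ Real.sqrt 2 * (n:ℝ) * (Real.sqrt (2*T)) ^ (k+1) := by
    calc A * B ≤ A * (Real.sqrt 2 * A * (Real.sqrt (2*T)) ^ (k+1)) :=
          mul_le_mul_of_nonneg_left hkey hA0.le
      _ = Real.sqrt 2 * (A * A) * (Real.sqrt (2*T)) ^ (k+1) := by ring
      _ = Real.sqrt 2 * (n:ℝ) * (Real.sqrt (2*T)) ^ (k+1) := by rw [hAA]
  nlinarith [mul_le_mul_of_nonneg_right hmain hTkpos.le]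


lemma volume_intRange : volume (Set.range ((↑) : ℤ → ℝ)) = 0 :=
  (Set.countable_range _).measure_zero _

end RuzsaAux

open RuzsaAux in
/-- **Theorem 2 (Ruzsa).** If `P` is a set of primes with `∑_{p ∈ P} 1/√p < ∞`, then the
set of non-integer reals `α > 1` for which the multiplicative monoid generated by
`P ∪ {α}` is `1`-separated has positive Lebesgue measure. -/
theorem stmt_1 (P : Set ℕ) (hP : ∀ p ∈ P, p.Prime)
    (hsum : Summable (fun p : P => 1 / Real.sqrt ((p : ℕ) : ℝ))) :
    0 < volume {α : ℝ | 1 < α ∧ α ∉ Set.range ((↑) : ℤ → ℝ) ∧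
      ∀ x ∈ Submonoid.closure ((((↑) : ℕ → ℝ) '' P) ∪ {α}),
        ∀ y ∈ Submonoid.closure ((((↑) : ℕ → ℝ) '' P) ∪ {α}),
          x ≠ y → 1 ≤ |x - y|} := by
  classical
  have hsummable := summable_sq_closure P hP hsum
  set C : ℝ := ∑' n : ↥(Submonoid.closure P), 1 / Real.sqrt ((n : ℕ) : ℝ) with hC
  have hC1 : 1 ≤ C := by
    have h := Summable.le_tsum hsummable ⟨1, one_mem _⟩ (fun j _ => by positivity)
    rw [hC]
    calc (1:ℝ) = 1 / Real.sqrt (((1:ℕ):ℝ)) := by norm_num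
      _ ≤ _ := h
  have hC0 : 0 ≤ C := by linarith
  set T : ℝ := (16 * C) ^ 4 with hTdef
  have hT8 : (8:ℝ) ≤ T := by
    have h4 : (1:ℝ) ≤ C^4 := one_le_pow₀ hC1
    rw [hTdef]
    nlinarith
  have hT0 : (0:ℝ) < T := by linarith
  have hsqT : Real.sqrt T = (16 * C) ^ 2 := by
    rw [hTdef, show ((16:ℝ) * C) ^ 4 = ((16 * C) ^ 2) ^ 2 by ring, Real.sqrt_sq (by positivity)]
  -- the bad set
  set Bad : Set ℝ := {α : ℝ | α ∈ Set.Ioo T (2*T) ∧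
    ¬ (∀ N ∈ Submonoid.closure P, ∀ M ∈ Submonoid.closure P,
        ∀ k : ℕ, 1 ≤ k → ((N:ℝ) * α ^ k ≠ (M:ℝ)) → 1 ≤ |(N:ℝ) * α ^ k - (M:ℝ)|)} with hBad
  -- Bad is covered by the union of the badE sets
  have hbad_subset : Bad ⊆ ⋃ i : ↥(Submonoid.closure P) ×
      (↥(Submonoid.closure P) × ℕ),
      badE T (i.1 : ℕ) (i.2.1 : ℕ) (i.2.2 + 1) := by
    intro α hα
    obtain ⟨hIoo, hno⟩ := hα
    push_neg at hno
    obtain ⟨N, hN, M, hM, k, hk, hne, hlt⟩ := hno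
    refine Set.mem_iUnion.mpr ⟨⟨⟨N, hN⟩, ⟨M, hM⟩, k - 1⟩, ?_⟩
    have hk1 : k - 1 + 1 = k := by omega
    rw [hk1]
    exact ⟨hIoo, hlt⟩
  -- geometric data
  set r : ℝ := Real.sqrt (2*T) / T with hr
  have hr0 : 0 ≤ r := by positivity
  have hrhalf : r ≤ 1/2 := by
    rw [hr, div_le_iff₀ hT0]
    have h1 : Real.sqrt (2*T) ≤ Real.sqrt (T^2/4) := Real.sqrt_le_sqrt (by nlinarith)
    have h2 : Real.sqrt (T^2/4) = T/2 := by
      rw [show T^2/4 = (T/2)^2 by ring, Real.sqrt_sq (by linarith)]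
    linarith
  have hr1 : r < 1 := by linarith
  -- sum of the geometric part
  have hsummg : Summable (fun j : ℕ => 4 * Real.sqrt 2 * T * r ^ (j+1)) := by
    have h := (summable_geometric_of_lt_one hr0 hr1).mul_left (4 * Real.sqrt 2 * T * r)
    refine h.congr fun j => ?_
    rw [pow_succ]
    ring
  have hgeomsum : ∑' j : ℕ, 4 * Real.sqrt 2 * T * r ^ (j+1)
      = 4 * Real.sqrt 2 * T * r * (1 - r)⁻¹ := by
    have h1 : ∀ j : ℕ, 4 * Real.sqrt 2 * T * r ^ (j+1)
        = (4 * Real.sqrt 2 * T * r) * r ^ j := fun j => by rw [pow_succ]; ring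
    calc ∑' j : ℕ, 4 * Real.sqrt 2 * T * r ^ (j+1)
        = ∑' j : ℕ, (4 * Real.sqrt 2 * T * r) * r ^ j := by exact tsum_congr h1
      _ = (4 * Real.sqrt 2 * T * r) * ∑' j : ℕ, r ^ j := by rw [tsum_mul_left]
      _ = 4 * Real.sqrt 2 * T * r * (1 - r)⁻¹ := by rw [tsum_geometric_of_lt_one hr0 hr1]
  -- measure of the bad set
  have hvol_bad : volume Bad ≤ ENNReal.ofReal (16 * C * C * Real.sqrt T) := by
    have step1 : volume Bad ≤ ∑' i : ↥(Submonoid.closure P) ×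
        (↥(Submonoid.closure P) × ℕ),
        volume (badE T (i.1 : ℕ) (i.2.1 : ℕ) (i.2.2 + 1)) :=
      (measure_mono hbad_subset).trans (measure_iUnion_le _)
    have step2 : ∀ i : ↥(Submonoid.closure P) ×
        (↥(Submonoid.closure P) × ℕ),
        volume (badE T (i.1 : ℕ) (i.2.1 : ℕ) (i.2.2 + 1)) ≤
          ENNReal.ofReal (1 / Real.sqrt ((i.1 : ℕ) : ℝ)) *
            (ENNReal.ofReal (1 / Real.sqrt ((i.2.1 : ℕ) : ℝ)) *
              ENNReal.ofReal (4 * Real.sqrt 2 * T * r ^ (i.2.2 + 1))) := by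
      intro i
      refine (volume_badE T hT8 _ _ _ (one_le_of_mem_closure P hP i.1.2)
        (one_le_of_mem_closure P hP i.2.1.2)).trans_eq ?_
      rw [← ENNReal.ofReal_mul (by positivity), ← ENNReal.ofReal_mul (by positivity)]
      congr 1
      rw [hr]
      ring
    have step3 : volume Bad ≤
        (∑' n : ↥(Submonoid.closure P), ENNReal.ofReal (1 / Real.sqrt ((n : ℕ) : ℝ))) *
        ((∑' n : ↥(Submonoid.closure P), ENNReal.ofReal (1 / Real.sqrt ((n : ℕ) : ℝ))) *
         (∑' j : ℕ, ENNReal.ofReal (4 * Real.sqrt 2 * T * r ^ (j + 1)))) := by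
      refine (step1.trans (ENNReal.tsum_le_tsum step2)).trans_eq ?_
      rw [ENNReal.tsum_prod']
      simp only [ENNReal.tsum_mul_left]
      congr 1
      rw [ENNReal.tsum_prod']
      simp only [ENNReal.tsum_mul_left]
      rw [ENNReal.tsum_mul_right, ENNReal.tsum_mul_right]
    have hofC : (∑' n : ↥(Submonoid.closure P),
        ENNReal.ofReal (1 / Real.sqrt ((n : ℕ) : ℝ))) = ENNReal.ofReal C := by
      rw [hC, ENNReal.ofReal_tsum_of_nonneg (fun n => by positivity) hsummable]
    have hofG : (∑' j : ℕ, ENNReal.ofReal (4 * Real.sqrt 2 * T * r ^ (j + 1)))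
        = ENNReal.ofReal (4 * Real.sqrt 2 * T * r * (1 - r)⁻¹) := by
      rw [← hgeomsum, ENNReal.ofReal_tsum_of_nonneg (fun j => by positivity) hsummg]
    rw [hofC, hofG] at step3
    refine step3.trans ?_
    rw [← ENNReal.ofReal_mul hC0, ← ENNReal.ofReal_mul (by positivity)]
    refine ENNReal.ofReal_le_ofReal ?_
    -- real arithmetic : C * (C * (4√2 T r (1-r)⁻¹)) ≤ 16 C C √T
    have h8 : 4 * Real.sqrt 2 * T * r = 8 * Real.sqrt T := by
      have h2 : Real.sqrt 2 * Real.sqrt 2 = 2 := Real.mul_self_sqrt (by norm_num)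
      rw [hr, Real.sqrt_mul (by norm_num : (0:ℝ) ≤ 2)]
      rw [show 4 * Real.sqrt 2 * T * (Real.sqrt 2 * Real.sqrt T / T)
          = 4 * (Real.sqrt 2 * Real.sqrt 2) * Real.sqrt T * (T / T) by ring, h2,
        div_self hT0.ne']
      ring
    have hinv : (1 - r)⁻¹ ≤ 2 := by
      have h12 : (1:ℝ)/2 ≤ 1 - r := by linarith
      calc (1 - r)⁻¹ ≤ ((1:ℝ)/2)⁻¹ := by
            apply inv_anti₀ (by norm_num) h12
        _ = 2 := by norm_num
    calc C * (C * (4 * Real.sqrt 2 * T * r * (1 - r)⁻¹))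
        = (C * C) * (8 * Real.sqrt T * (1 - r)⁻¹) := by rw [h8]; ring
      _ ≤ (C * C) * (8 * Real.sqrt T * 2) := by
          refine mul_le_mul_of_nonneg_left ?_ (mul_nonneg hC0 hC0)
          exact mul_le_mul_of_nonneg_left hinv (by positivity)
      _ = 16 * C * C * Real.sqrt T := by ring
  -- conclusion
  set Good : Set ℝ := {α : ℝ | 1 < α ∧ α ∉ Set.range ((↑) : ℤ → ℝ) ∧
      ∀ x ∈ Submonoid.closure ((((↑) : ℕ → ℝ) '' P) ∪ {α}),
        ∀ y ∈ Submonoid.closure ((((↑) : ℕ → ℝ) '' P) ∪ {α}),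
          x ≠ y → 1 ≤ |x - y|} with hGood
  have hcover : Set.Ioo T (2*T) ⊆ Good ∪ (Bad ∪ Set.range ((↑) : ℤ → ℝ)) := by
    intro α hα
    by_cases hz : α ∈ Set.range ((↑) : ℤ → ℝ)
    · exact Or.inr (Or.inr hz)
    by_cases hb : α ∈ Bad
    · exact Or.inr (Or.inl hb)
    left
    have hG : ∀ N ∈ Submonoid.closure P, ∀ M ∈ Submonoid.closure P,
        ∀ k : ℕ, 1 ≤ k → ((N:ℝ) * α ^ k ≠ (M:ℝ)) → 1 ≤ |(N:ℝ) * α ^ k - (M:ℝ)| := by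
      by_contra hcon
      exact hb ⟨hα, hcon⟩
    have hα1 : 1 < α := lt_trans (by linarith : (1:ℝ) < T) hα.1
    exact ⟨hα1, hz, separation P hα1 hG⟩
  by_contra hpos
  push_neg at hpos
  have hzero : volume Good = 0 := le_antisymm hpos zero_le
  have hIoo : volume (Set.Ioo T (2*T)) = ENNReal.ofReal T := by
    rw [Real.volume_Ioo, show 2*T - T = T by ring]
  have hle : ENNReal.ofReal T ≤ ENNReal.ofReal (16 * C * C * Real.sqrt T) := by
    calc ENNReal.ofReal T = volume (Set.Ioo T (2*T)) := hIoo.symm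
      _ ≤ volume (Good ∪ (Bad ∪ Set.range ((↑) : ℤ → ℝ))) := measure_mono hcover
      _ ≤ volume Good + (volume Bad + volume (Set.range ((↑) : ℤ → ℝ))) :=
          le_trans (measure_union_le _ _) (by gcongr; exact measure_union_le _ _)
      _ = volume Bad := by rw [hzero, volume_intRange, zero_add, add_zero]
      _ ≤ ENNReal.ofReal (16 * C * C * Real.sqrt T) := hvol_bad
  rw [ENNReal.ofReal_le_ofReal_iff (by positivity)] at hle
  -- but 16 C C √T = T/16 < T
  rw [hsqT] at hle
  nlinarith [hC1, hle]
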